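/- As formal power series, (q;q)_∞ (-1;q)_∞ (-q;q)_∞ = ∑_{n∈ℤ} q^{n(n+1)/2}. -/

import Mathlib

open PowerSeries

namespace JTPproof
open Finset
noncomputable section

def tri (j : ℤ) : ℕ := (j * (j + 1) / 2).toNat

lemma tri_two_mul (j : ℤ) : 2 * (tri j : ℤ) = j * (j + 1) := by
  have h2 : 2 ∣ j * (j + 1) := (Int.even_mul_succ_self j).two_dvd
  have hnn : 0 ≤ j * (j + 1) := by nlinarith [sq_nonneg (2*j+1)]
  unfold tri
  omega

lemma tri_succ (j : ℤ) : (tri (j + 1) : ℤ) = tri j + (j + 1) := by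
  have h1 := tri_two_mul j
  have h2 := tri_two_mul (j + 1)
  nlinarith [h1, h2]

lemma tri_bound (j : ℤ) : |j| ≤ (tri j : ℤ) + 1 := by
  have h1 := tri_two_mul j
  rcases abs_cases j with ⟨h, _⟩ | ⟨h, _⟩ <;> nlinarith

/-- `Q t = ∏_{i=1}^{t} (1 - X^i)` in `ℤ⟦X⟧`. -/
def Q (t : ℕ) : ℤ⟦X⟧ := ∏ i ∈ Finset.Ico 1 (t + 1), (1 - X ^ i)

lemma isUnit_Q (t : ℕ) : IsUnit (Q t) := by
  rw [PowerSeries.isUnit_iff_constantCoeff]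
  have : constantCoeff (R := ℤ) (Q t) = 1 := by
    unfold Q
    rw [map_prod]
    refine Finset.prod_eq_one fun i hi => ?_
    have hi1 : 1 ≤ i := (Finset.mem_Ico.mp hi).1
    simp [map_sub, map_pow, PowerSeries.constantCoeff_X, zero_pow (by omega : i ≠ 0)]
  rw [this]; exact isUnit_one

def iQ (t : ℕ) : ℤ⟦X⟧ := Ring.inverse (Q t)

lemma Q_mul_iQ (t : ℕ) : Q t * iQ t = 1 := Ring.mul_inverse_cancel _ (isUnit_Q t)

lemma Q_succ (t : ℕ) : Q (t + 1) = Q t * (1 - X ^ (t + 1)) := by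
  unfold Q
  rw [Finset.prod_Ico_succ_top (by omega)]

lemma Q_zero : Q 0 = 1 := by unfold Q; simp

lemma iQ_zero : iQ 0 = 1 := by unfold iQ; rw [Q_zero, Ring.inverse_one]

/-- Gaussian binomial coefficient as an element of `ℤ⟦X⟧`. -/
def gb (n k : ℕ) : ℤ⟦X⟧ := Q n * iQ k * iQ (n - k)

lemma gbQQ' (n k c : ℕ) (h : n = k + c) : gb n k * (Q k * Q c) = Q n := by
  subst h
  unfold gb
  rw [Nat.add_sub_cancel_left]
  linear_combination (Q (k+c) * iQ c * Q c) * (Q_mul_iQ k) + Q (k+c) * (Q_mul_iQ c)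

lemma gb_zero (n : ℕ) : gb n 0 = 1 := by
  unfold gb
  rw [iQ_zero, Nat.sub_zero, mul_one]
  exact Q_mul_iQ n

lemma gb_self (n : ℕ) : gb n n = 1 := by
  unfold gb
  rw [Nat.sub_self, iQ_zero, mul_one]
  exact Q_mul_iQ n

lemma gb_symm (n k : ℕ) (h : k ≤ n) : gb n (n - k) = gb n k := by
  unfold gb
  rw [Nat.sub_sub_self h]
  ring

lemma gb_edge1 (t : ℕ) :
    gb (t + 3) 1 = X * gb (t + 1) 1 + (1 + X ^ (t + 2)) := by
  have e1 := gbQQ' (t+3) 1 (t+2) (by omega)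
  have e2 := gbQQ' (t+1) 1 t (by omega)
  have qt1 : Q (t+1) = Q t * (1 - X^(t+1)) := Q_succ t
  have qt2 : Q (t+2) = Q (t+1) * (1 - X^(t+2)) := Q_succ (t+1)
  have qt3 : Q (t+3) = Q (t+2) * (1 - X^(t+3)) := Q_succ (t+2)
  have q1 : Q 1 = 1 - X ^ 1 := by rw [Q_succ 0, Q_zero, one_mul]
  apply ((isUnit_Q 1).mul (isUnit_Q (t+2))).mul_left_cancel
  rw [qt3] at e1
  simp only [qt2, qt1, q1] at e1 e2 ⊢
  linear_combination e1 - X * (1 - X^(t+1)) * (1 - X^(t+2)) * e2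

lemma gb_two_one : gb 2 1 = 1 + X ^ 1 := by
  have e := gbQQ' 2 1 1 (by omega)
  have q1 : Q 1 = 1 - X ^ 1 := by rw [Q_succ 0, Q_zero, one_mul]
  have q2 : Q 2 = Q 1 * (1 - X ^ 2) := Q_succ 1
  apply ((isUnit_Q 1).mul (isUnit_Q 1)).mul_left_cancel
  rw [q2] at e
  simp only [q1] at e ⊢
  linear_combination e

/-- central double-Pascal identity for the Gaussian binomials -/
lemma gb_key (a c : ℕ) :
    gb (a + c + 4) (a + 2) =
      (1 + X ^ (a + c + 3)) * gb (a + c + 2) (a + 1)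
        + X ^ (a + 2) * gb (a + c + 2) (a + 2) + X ^ (c + 2) * gb (a + c + 2) a := by
  have e1 := gbQQ' (a+c+4) (a+2) (c+2) (by omega)
  have e2 := gbQQ' (a+c+2) (a+1) (c+1) (by omega)
  have e3 := gbQQ' (a+c+2) (a+2) c (by omega)
  have e4 := gbQQ' (a+c+2) a (c+2) (by omega)
  have qa1 : Q (a+1) = Q a * (1 - X^(a+1)) := Q_succ a
  have qa2 : Q (a+2) = Q (a+1) * (1 - X^(a+2)) := Q_succ (a+1)
  have qc1 : Q (c+1) = Q c * (1 - X^(c+1)) := Q_succ c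
  have qc2 : Q (c+2) = Q (c+1) * (1 - X^(c+2)) := Q_succ (c+1)
  have q5 : Q (a+c+3) = Q (a+c+2) * (1 - X^(a+c+3)) := Q_succ (a+c+2)
  have q6 : Q (a+c+4) = Q (a+c+3) * (1 - X^(a+c+4)) := Q_succ (a+c+3)
  apply ((isUnit_Q (a+2)).mul (isUnit_Q (c+2))).mul_left_cancel
  rw [q6, q5] at e1
  simp only [qa2, qc2, qa1, qc1] at e1 e2 e3 e4 ⊢
  linear_combination e1 - ((1 + X^(a+c+3)) * (1 - X^(a+2)) * (1 - X^(c+2))) * e2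
    - (X^(a+2) * (1 - X^(c+1)) * (1 - X^(c+2))) * e3
    - (X^(c+2) * (1 - X^(a+1)) * (1 - X^(a+2))) * e4

/-- coefficient of `z^k` in the finite Jacobi triple product -/
def term (N : ℕ) (k : ℤ) : ℤ⟦X⟧ :=
  if 0 ≤ k ∧ k ≤ 2 * N then gb (2 * N) k.toNat * X ^ tri (k - N) else 0

lemma term_of_neg (N : ℕ) (k : ℤ) (h : k < 0) : term N k = 0 := by
  unfold term; rw [if_neg (by omega)]

lemma term_of_big (N : ℕ) (k : ℤ) (h : 2 * N < k) : term N k = 0 := by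
  unfold term; rw [if_neg (by omega)]

lemma term_of_mem (N : ℕ) (k : ℤ) (h0 : 0 ≤ k) (h1 : k ≤ 2 * N) :
    term N k = gb (2 * N) k.toNat * X ^ tri (k - N) := by
  unfold term; rw [if_pos ⟨h0, h1⟩]

lemma key (N : ℕ) (k : ℤ) :
    term (N + 1) k =
      X ^ N * term N k + (1 + X ^ (2 * N + 1)) * term N (k - 1)
        + X ^ (N + 1) * term N (k - 2) := by
  rcases lt_or_ge k 0 with hk | hk
  · rw [term_of_neg _ _ hk, term_of_neg _ _ hk, term_of_neg _ _ (by omega),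
      term_of_neg _ _ (by omega)]
    ring
  lift k to ℕ using hk with κ
  rcases Nat.lt_or_ge (2 * N + 2) κ with hbig | hle
  · rw [term_of_big _ _ (by push_cast; omega), term_of_big _ _ (by push_cast; omega),
      term_of_big _ _ (by push_cast; omega), term_of_big _ _ (by push_cast; omega)]
    ring
  -- now κ ≤ 2N + 2
  rcases Nat.eq_zero_or_pos κ with rfl | hpos
  · -- κ = 0
    simp only [Nat.cast_zero]
    rw [term_of_mem (N+1) 0 le_rfl (by push_cast; omega),
      term_of_mem N 0 le_rfl (by positivity),
      term_of_neg N (0-1) (by omega), term_of_neg N (0-2) (by omega)]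
    simp only [Int.toNat_zero, gb_zero, one_mul, mul_zero, add_zero]
    have harg : (0:ℤ) - ↑(N+1) = (-(N:ℤ) - 1) := by push_cast; ring
    have harg2 : (0:ℤ) - ↑N = (-(N:ℤ) - 1) + 1 := by push_cast; ring
    rw [harg, harg2, ← pow_add]
    have t1 := tri_succ (-(N:ℤ) - 1)
    have hexp : tri (-(N:ℤ) - 1) = N + tri ((-(N:ℤ) - 1) + 1) := by omega
    rw [hexp]
  rcases Nat.eq_or_lt_of_le hle with rfl | hlt
  · -- κ = 2N + 2
    rw [term_of_mem (N+1) ((2*N+2 : ℕ):ℤ) (by omega) (by push_cast; omega),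
      term_of_big N _ (by push_cast; omega), term_of_big N _ (by push_cast; omega),
      term_of_mem N (((2*N+2:ℕ):ℤ) - 2) (by push_cast; omega) (by push_cast; omega)]
    have e1 : ((2 * N + 2 : ℕ) : ℤ).toNat = 2 * (N + 1) := by omega
    have e2 : (((2 * N + 2 : ℕ) : ℤ) - 2).toNat = 2 * N := by omega
    rw [e1, e2, gb_self, gb_self]
    simp only [one_mul, mul_zero, zero_add, add_zero]
    rw [← pow_add]
    congr 1
    have harg : ((2 * N + 2 : ℕ) : ℤ) - ↑(N + 1) = (N : ℤ) + 1 := by push_cast; ring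
    have harg2 : ((2 * N + 2 : ℕ) : ℤ) - 2 - ↑N = (N : ℤ) := by push_cast; ring
    rw [harg, harg2]
    have t1 := tri_succ (N : ℤ)
    omega
  -- now 1 ≤ κ ≤ 2N+1
  have gb21 : gb 2 1 = 1 + X ^ 1 := gb_two_one
  rcases Nat.eq_or_lt_of_le hpos with h1 | h2
  · -- κ = 1
    subst h1
    simp only [Nat.cast_one]
    rcases Nat.eq_zero_or_pos N with rfl | hN
    · rw [term_of_mem 1 1 (by omega) (by omega), term_of_big 0 1 (by omega),
        term_of_mem 0 (1-1) (by omega) (by omega), term_of_neg 0 (1-2) (by omega)]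
      norm_num [gb_zero, gb21]
    · rw [term_of_mem (N+1) 1 (by omega) (by push_cast; omega),
        term_of_mem N 1 (by omega) (by push_cast; omega),
        term_of_mem N (1-1) (by omega) (by push_cast; omega),
        term_of_neg N (1-2) (by omega)]
      rw [show ((1:ℤ)).toNat = 1 by omega, show ((1:ℤ) - 1).toNat = 0 by omega, gb_zero]
      have edge : gb (2*(N+1)) 1 = X * gb (2*N) 1 + (1 + X^(2*N+1)) := by
        have h := gb_edge1 (2*N-1)
        rw [show 2*N-1+3 = 2*(N+1) by omega, show 2*N-1+1 = 2*N by omega,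
          show 2*N-1+2 = 2*N+1 by omega] at h
        exact h
      rw [show (1:ℤ) - ↑(N+1) = -(N:ℤ) from by push_cast; ring,
        show (1:ℤ) - 1 - ↑N = -(N:ℤ) from by push_cast; ring,
        show (1:ℤ) - ↑N = -(N:ℤ) + 1 from by push_cast; ring]
      have t1 := tri_succ (-(N:ℤ))
      have hp : N + tri (-(N:ℤ) + 1) = tri (-(N:ℤ)) + 1 := by omega
      have p : (X:ℤ⟦X⟧) ^ (N + tri (-(N:ℤ) + 1)) = X ^ (tri (-(N:ℤ)) + 1) := by rw [hp]
      linear_combination (X:ℤ⟦X⟧) ^ (tri (-(N:ℤ))) * edge - gb (2*N) 1 * p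
  rcases Nat.eq_or_lt_of_le hlt with htop | hmid
  · -- κ = 2N + 1  (so N ≥ 1 since κ ≥ 2)
    have hN : 1 ≤ N := by omega
    have hκ : κ = 2*N + 1 := by omega
    subst hκ
    rw [term_of_mem (N+1) _ (by omega) (by push_cast; omega),
      term_of_big N _ (by push_cast; omega),
      term_of_mem N (((2*N+1 : ℕ):ℤ) - 1) (by push_cast; omega) (by push_cast; omega),
      term_of_mem N (((2*N+1 : ℕ):ℤ) - 2) (by push_cast; omega) (by push_cast; omega)]
    rw [show ((2*N+1 : ℕ):ℤ).toNat = 2*N+1 by omega,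
      show (((2*N+1 : ℕ):ℤ) - 1).toNat = 2*N by omega,
      show (((2*N+1 : ℕ):ℤ) - 2).toNat = 2*N - 1 by omega, gb_self]
    have hs1 : gb (2*(N+1)) (2*N+1) = gb (2*(N+1)) 1 := by
      rw [show 2*N+1 = 2*(N+1) - 1 by omega]
      exact gb_symm (2*(N+1)) 1 (by omega)
    have hs2 : gb (2*N) (2*N - 1) = gb (2*N) 1 := by
      rw [show 2*N - 1 = 2*N - 1 from rfl]
      exact gb_symm (2*N) 1 (by omega)
    have edge : gb (2*(N+1)) 1 = X * gb (2*N) 1 + (1 + X^(2*N+1)) := by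
      have h := gb_edge1 (2*N-1)
      rw [show 2*N-1+3 = 2*(N+1) by omega, show 2*N-1+1 = 2*N by omega,
        show 2*N-1+2 = 2*N+1 by omega] at h
      exact h
    rw [hs1, hs2]
    rw [show ((2*N+1 : ℕ):ℤ) - ↑(N+1) = (N:ℤ) from by push_cast; ring,
      show ((2*N+1 : ℕ):ℤ) - 1 - ↑N = (N:ℤ) from by push_cast; ring,
      show ((2*N+1 : ℕ):ℤ) - 2 - ↑N = (N:ℤ) - 1 from by push_cast; ring]
    have t1 := tri_succ ((N:ℤ) - 1)
    rw [show (N:ℤ) - 1 + 1 = (N:ℤ) from by ring] at t1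
    have hp : (N + 1) + tri ((N:ℤ) - 1) = tri (N:ℤ) + 1 := by omega
    have p : (X:ℤ⟦X⟧) ^ ((N + 1) + tri ((N:ℤ) - 1)) = X ^ (tri (N:ℤ) + 1) := by rw [hp]
    linear_combination (X:ℤ⟦X⟧) ^ (tri (N:ℤ)) * edge - gb (2*N) 1 * p
  · -- 2 ≤ κ ≤ 2N : generic
    obtain ⟨a, rfl⟩ : ∃ a, κ = a + 2 := ⟨κ - 2, by omega⟩
    obtain ⟨c, hc⟩ : ∃ c, 2 * N = a + c + 2 := ⟨2*N - (a+2), by omega⟩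
    rw [term_of_mem (N+1) _ (by positivity) (by push_cast; omega),
      term_of_mem N _ (by positivity) (by push_cast; omega),
      term_of_mem N (((a+2 : ℕ):ℤ) - 1) (by push_cast; omega) (by push_cast; omega),
      term_of_mem N (((a+2 : ℕ):ℤ) - 2) (by push_cast; omega) (by push_cast; omega)]
    rw [show ((a+2:ℕ):ℤ).toNat = a + 2 by omega, show (((a+2:ℕ):ℤ) - 1).toNat = a + 1 by omega,
      show (((a+2:ℕ):ℤ) - 2).toNat = a by omega]
    rw [show 2*(N+1) = a + c + 4 by omega, hc]
    rw [show ((a+2:ℕ):ℤ) - 1 - ↑N = ((a+2:ℕ):ℤ) - ↑(N+1) from by push_cast; ring]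
    have t1 := tri_succ (((a+2:ℕ):ℤ) - ↑(N+1))
    rw [show ((a+2:ℕ):ℤ) - ↑(N+1) + 1 = ((a+2:ℕ):ℤ) - ↑N from by push_cast; ring] at t1
    have t2 := tri_succ (((a+2:ℕ):ℤ) - 2 - ↑N)
    rw [show ((a+2:ℕ):ℤ) - 2 - ↑N + 1 = ((a+2:ℕ):ℤ) - ↑(N+1) from by push_cast; ring] at t2
    have hB : N + tri (((a+2:ℕ):ℤ) - ↑N) = tri (((a+2:ℕ):ℤ) - ↑(N+1)) + (a+2) := by omega
    have hC : (N+1) + tri (((a+2:ℕ):ℤ) - 2 - ↑N)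
        = tri (((a+2:ℕ):ℤ) - ↑(N+1)) + (c+2) := by omega
    have p1 : (X:ℤ⟦X⟧) ^ (N + tri (((a+2:ℕ):ℤ) - ↑N))
        = X ^ (tri (((a+2:ℕ):ℤ) - ↑(N+1)) + (a+2)) := by rw [hB]
    have p2 : (X:ℤ⟦X⟧) ^ ((N+1) + tri (((a+2:ℕ):ℤ) - 2 - ↑N))
        = X ^ (tri (((a+2:ℕ):ℤ) - ↑(N+1)) + (c+2)) := by rw [hC]
    linear_combination (X:ℤ⟦X⟧) ^ (tri (((a+2:ℕ):ℤ) - ↑(N+1))) * gb_key a c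
      - gb (a+c+2) (a+2) * p1 - gb (a+c+2) a * p2


def F (N : ℕ) : Polynomial ℤ⟦X⟧ :=
  ∑ k ∈ range (2 * N + 1), Polynomial.C (term N k) * Polynomial.X ^ k

lemma F_coeff (N : ℕ) (j : ℕ) : (F N).coeff j = term N j := by
  unfold F
  rw [Polynomial.finset_sum_coeff]
  simp only [Polynomial.coeff_C_mul, Polynomial.coeff_X_pow, mul_ite, mul_one, mul_zero]
  rw [Finset.sum_ite_eq (range (2*N+1)) j (fun k => term N (k:ℤ))]
  split_ifs with h
  · rfl
  · rw [term_of_big]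
    simp only [mem_range] at h
    omega

lemma jtp (N : ℕ) :
    ∏ j ∈ range N,
      ((1 + Polynomial.C ((X : ℤ⟦X⟧) ^ (j+1)) * Polynomial.X) *
        (Polynomial.X + Polynomial.C ((X : ℤ⟦X⟧) ^ j))) = F N := by
  induction N with
  | zero =>
    rw [Finset.prod_range_zero]
    unfold F
    rw [Finset.sum_range_one]
    norm_num
    rw [term_of_mem 0 0 le_rfl (by omega)]
    norm_num [gb_zero]
    rw [show tri (0:ℤ) = 0 from rfl]
    simp
  | succ n ih =>
    rw [Finset.prod_range_succ, ih]
    have hG : (1 + Polynomial.C ((X : ℤ⟦X⟧) ^ (n+1)) * Polynomial.X) *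
        (Polynomial.X + Polynomial.C ((X : ℤ⟦X⟧) ^ n))
        = Polynomial.C ((X:ℤ⟦X⟧)^n) * Polynomial.X ^ 0
          + Polynomial.C (1 + (X:ℤ⟦X⟧)^(2*n+1)) * Polynomial.X ^ 1
          + Polynomial.C ((X:ℤ⟦X⟧)^(n+1)) * Polynomial.X ^ 2 := by
      rw [Polynomial.C_add, Polynomial.C_1,
        show (X:ℤ⟦X⟧)^(2*n+1) = X^(n+1) * X^n from by rw [← pow_add]; congr 1; omega,
        Polynomial.C_mul]
      ring
    rw [hG]
    apply Polynomial.ext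
    intro j
    rw [F_coeff]
    simp only [mul_add, Polynomial.coeff_add, ← mul_assoc, Polynomial.coeff_mul_X_pow',
      Polynomial.coeff_mul_C, F_coeff]
    rw [key n j, Nat.sub_zero, if_pos (Nat.zero_le j)]
    rcases Nat.lt_or_ge j 1 with h1 | h1
    · have hj : j = 0 := by omega
      subst hj
      norm_num
      rw [term_of_neg n (-1) (by omega), term_of_neg n (-2) (by omega)]
      ring
    rcases Nat.lt_or_ge j 2 with h2 | h2
    · have hj : j = 1 := by omega
      subst hj
      norm_num
      rw [term_of_neg n (-1) (by omega)]
      push_cast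
      ring
    · rw [if_pos h1, if_pos h2]
      push_cast [Nat.cast_sub h1, Nat.cast_sub h2]
      ring

lemma jtp_eval (N : ℕ) :
    (∏ j ∈ range N, ((1 + (X:ℤ⟦X⟧)^(j+1)) * (1 + (X:ℤ⟦X⟧)^j)))
      = ∑ k ∈ range (2*N+1), term N k := by
  have h := congrArg (Polynomial.eval 1) (jtp N)
  simp only [Polynomial.eval_prod, Polynomial.eval_finset_sum, Polynomial.eval_mul,
    Polynomial.eval_add, Polynomial.eval_one, Polynomial.eval_C, Polynomial.eval_X,
    Polynomial.eval_pow, one_pow, mul_one, F] at h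
  exact h


lemma prod_one_sub (s : Finset ℕ) (a : ℕ) (h : ∀ i ∈ s, a ≤ i) :
    ∃ g, ∏ i ∈ s, (1 - (X : ℤ⟦X⟧) ^ i) = 1 + X ^ a * g := by
  classical
  induction s using Finset.induction_on with
  | empty => exact ⟨0, by simp⟩
  | @insert x s hx ih =>
    obtain ⟨g, hg⟩ := ih fun i hi => h i (Finset.mem_insert_of_mem hi)
    have ha : a ≤ x := h x (Finset.mem_insert_self _ _)
    refine ⟨g - X ^ (x - a) - X ^ (x - a) * X ^ a * g, ?_⟩
    rw [Finset.prod_insert hx, hg]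
    have hx' : (X : ℤ⟦X⟧) ^ x = X ^ a * X ^ (x - a) := by
      rw [← pow_add]; congr 1; omega
    rw [hx']
    ring

lemma Q_split (a b : ℕ) (h : a ≤ b) :
    Q b = Q a * ∏ i ∈ Finset.Ico (a + 1) (b + 1), (1 - (X : ℤ⟦X⟧) ^ i) := by
  unfold Q
  rw [← Finset.prod_Ico_consecutive _ (by omega : 1 ≤ a + 1) (by omega : a + 1 ≤ b + 1)]

lemma QgB_aux (N k : ℕ) (hk : k ≤ N) :
    ∃ g, Q N * gb (2 * N) k = 1 + X ^ (k + 1) * g := by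
  have e1 : Q N * iQ k = ∏ i ∈ Finset.Ico (k + 1) (N + 1), (1 - (X : ℤ⟦X⟧) ^ i) := by
    rw [Q_split k N hk]
    linear_combination (∏ i ∈ Finset.Ico (k + 1) (N + 1), (1 - (X : ℤ⟦X⟧) ^ i)) * Q_mul_iQ k
  have e2 : Q (2 * N) * iQ (2 * N - k)
      = ∏ i ∈ Finset.Ico (2 * N - k + 1) (2 * N + 1), (1 - (X : ℤ⟦X⟧) ^ i) := by
    rw [Q_split (2 * N - k) (2 * N) (by omega)]
    linear_combination
      (∏ i ∈ Finset.Ico (2 * N - k + 1) (2 * N + 1), (1 - (X : ℤ⟦X⟧) ^ i)) * Q_mul_iQ (2 * N - k)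
  have hre : Q N * gb (2 * N) k = (Q N * iQ k) * (Q (2 * N) * iQ (2 * N - k)) := by
    unfold gb; ring
  rw [hre, e1, e2]
  obtain ⟨g1, h1⟩ := prod_one_sub (Finset.Ico (k + 1) (N + 1)) (k + 1)
    (fun i hi => (Finset.mem_Ico.mp hi).1)
  obtain ⟨g2, h2⟩ := prod_one_sub (Finset.Ico (2 * N - k + 1) (2 * N + 1)) (k + 1)
    (fun i hi => by have := (Finset.mem_Ico.mp hi).1; omega)
  exact ⟨g1 + g2 + X ^ (k + 1) * g1 * g2, by rw [h1, h2]; ring⟩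

lemma QgB (N k : ℕ) (hk : k ≤ 2 * N) :
    ∃ g, Q N * gb (2 * N) k = 1 + X ^ (min k (2 * N - k) + 1) * g := by
  rcases le_or_gt k N with h | h
  · rw [show min k (2 * N - k) = k by omega]
    exact QgB_aux N k h
  · rw [show min k (2 * N - k) = 2 * N - k by omega, ← gb_symm (2 * N) k hk]
    exact QgB_aux N (2 * N - k) (by omega)

/-- the m-th coefficient of `Q (m+1) * term (m+1) k` counts triangular hits -/
lemma coeff_count (m k : ℕ) (hk : k ≤ 2 * (m + 1)) :
    (PowerSeries.coeff (R := ℤ) m) (Q (m + 1) * term (m + 1) k)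
      = if tri ((k : ℤ) - (m + 1)) = m then 1 else 0 := by
  set N := m + 1 with hN
  rw [term_of_mem N k (by positivity) (by exact_mod_cast hk)]
  rw [show ((k : ℤ)).toNat = k from by omega]
  obtain ⟨g, hg⟩ := QgB N k hk
  have hre : Q N * (gb (2 * N) k * X ^ tri ((k : ℤ) - N))
      = X ^ tri ((k : ℤ) - N) + X ^ (tri ((k : ℤ) - N) + (min k (2 * N - k) + 1)) * g := by
    linear_combination (X : ℤ⟦X⟧) ^ tri ((k : ℤ) - N) * hg
  have hb := tri_bound ((k : ℤ) - N)
  have hb1 : ((k : ℤ) - N) ≤ tri ((k : ℤ) - N) + 1 := le_trans (le_abs_self _) hb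
  have hb2 : -((k : ℤ) - N) ≤ tri ((k : ℤ) - N) + 1 := le_trans (neg_le_abs _) hb
  have hcond : ¬(tri ((k : ℤ) - N) + (min k (2 * N - k) + 1) ≤ m) := by omega
  rw [hre, map_add, PowerSeries.coeff_X_pow, PowerSeries.coeff_X_pow_mul', if_neg hcond,
    add_zero, show ((m : ℤ) + 1) = (N : ℤ) from by rw [hN]; push_cast; ring,
    if_congr eq_comm rfl rfl]


end
end JTPproof


set_option maxHeartbeats 1000000 in
/- `(q;q)_∞ (-1;q)_∞ (-q;q)_∞ = ∑_{n∈ℤ} q^{n(n+1)/2}`, stated coefficientwise: the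
`m`-th coefficient of each side is already attained by the partial products/sums
shown (every `n ∈ ℤ` with `n(n+1)/2 ≤ m` satisfies `-(m+1) ≤ n ≤ m`). -/
open Finset JTPproof in
theorem stmt10 (m : ℕ) :
    PowerSeries.coeff (R := ℤ) m
      ((∏ k ∈ Finset.range (m + 1), (1 - (X : ℤ⟦X⟧) ^ (k + 1))) *
        (∏ k ∈ Finset.range (m + 1), (1 + (X : ℤ⟦X⟧) ^ k)) *
        ∏ k ∈ Finset.range (m + 1), (1 + (X : ℤ⟦X⟧) ^ (k + 1))) =
    PowerSeries.coeff (R := ℤ) m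
      (∑ n ∈ Finset.Icc (-(m : ℤ) - 1) (m : ℤ),
        (X : ℤ⟦X⟧) ^ ((n * (n + 1) / 2).toNat)) := by
  have hQ : (∏ k ∈ Finset.range (m + 1), (1 - (X : ℤ⟦X⟧) ^ (k + 1))) = Q (m + 1) := by
    unfold Q
    rw [Finset.prod_Ico_eq_prod_range, show m + 1 + 1 - 1 = m + 1 by omega]
    exact Finset.prod_congr rfl fun i _ => by rw [add_comm]
  have hP23 : (∏ k ∈ Finset.range (m + 1), (1 + (X : ℤ⟦X⟧) ^ k)) *
      (∏ k ∈ Finset.range (m + 1), (1 + (X : ℤ⟦X⟧) ^ (k + 1)))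
      = ∑ k ∈ range (2 * (m + 1) + 1), term (m + 1) k := by
    have h := jtp_eval (m + 1)
    rw [Finset.prod_mul_distrib] at h
    rw [mul_comm]
    exact h
  rw [hQ, mul_assoc, hP23, Finset.mul_sum, map_sum]
  have hL : ∑ k ∈ range (2 * (m + 1) + 1), (PowerSeries.coeff (R := ℤ) m) (Q (m + 1) * term (m + 1) k)
      = ∑ k ∈ range (2 * (m + 1) + 1), (if tri ((k : ℤ) - (m + 1)) = m then (1:ℤ) else 0) :=
    Finset.sum_congr rfl fun k hk => coeff_count m k (by simpa using Nat.lt_succ_iff.mp (mem_range.mp hk))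
  rw [hL]
  have hR : (PowerSeries.coeff (R := ℤ) m)
      (∑ n ∈ Finset.Icc (-(m : ℤ) - 1) (m : ℤ), (X : ℤ⟦X⟧) ^ ((n * (n + 1) / 2).toNat))
      = ∑ n ∈ Finset.Icc (-(m : ℤ) - 1) (m : ℤ), (if tri n = m then (1:ℤ) else 0) := by
    rw [map_sum]
    exact Finset.sum_congr rfl fun n _ => by
      rw [PowerSeries.coeff_X_pow, if_congr eq_comm rfl rfl]
      rfl
  rw [hR]
  -- reindex
  have hbij : ∑ k ∈ range (2 * (m + 1) + 1), (if tri ((k : ℤ) - (m + 1)) = m then (1:ℤ) else 0)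
      = ∑ n ∈ Finset.Icc (-((m:ℤ) + 1)) ((m:ℤ) + 1), (if tri n = m then (1:ℤ) else 0) := by
    refine Finset.sum_nbij' (i := fun k => (k : ℤ) - (m + 1))
      (j := fun n => (n + (m + 1)).toNat) ?_ ?_ ?_ ?_ ?_
    · intro a ha
      simp only [Finset.mem_range] at ha
      simp only [Finset.mem_Icc]
      omega
    · intro n hn
      simp only [Finset.mem_Icc] at hn
      simp only [Finset.mem_range]
      omega
    · intro a ha
      simp only [Finset.mem_range] at ha
      omega
    · intro n hn
      simp only [Finset.mem_Icc] at hn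
      omega
    · intro a ha
      rfl
  rw [hbij]
  have hsplit : Finset.Icc (-((m:ℤ) + 1)) ((m:ℤ) + 1)
      = insert ((m:ℤ) + 1) (Finset.Icc (-((m:ℤ)) - 1) (m:ℤ)) := by
    ext x
    simp only [Finset.mem_Icc, Finset.mem_insert]
    omega
  rw [hsplit, Finset.sum_insert (by simp)]
  have htop : tri ((m:ℤ) + 1) ≠ m := by
    have h := tri_two_mul ((m:ℤ) + 1)
    nlinarith [sq_nonneg ((m:ℤ))]
  rw [if_neg htop, zero_add]
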